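/- With the hyperplane-section setup (points P_1, …, P_n in the hyperplane H: x_0 = 0 of P^{N+1}, with I their radical ideal in K[x_1, …, x_{N+1}] and Î their radical ideal in K[x_0, …, x_{N+1}]): if I^{(rN−(N−1))} ⊆ I^r holds for all integers r ≥ 1, then Î^{(r(N+1)−N)} ⊆ Î^{(rN−(N−1))} ⊆ Î^r holds for all integers r ≥ 1. -/

import Mathlib

open MvPolynomial

noncomputable section

/-- The ideal generated by all homogeneous forms vanishing at the point with
coordinate vector `p`. -/
def homVanishingIdeal {K σ : Type*} [Field K] (p : σ → K) : Ideal (MvPolynomial σ K) :=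
  Ideal.span {F : MvPolynomial σ K | (∃ d, F.IsHomogeneous d) ∧ MvPolynomial.eval p F = 0}

/-- The `m`-th symbolic power of the radical ideal of the finite set of points
with coordinate vectors `P i`: the intersection of the `m`-th powers of the
ideals of the individual points. -/
def symbPow {K σ ι : Type*} [Field K] (P : ι → σ → K) (m : ℕ) : Ideal (MvPolynomial σ K) :=
  ⨅ i, homVanishingIdeal (P i) ^ m

/-- The irrelevant maximal ideal `M = (x_0, …, x_N)`. -/
def irrel (K σ : Type*) [Field K] : Ideal (MvPolynomial σ K) :=
  Ideal.span (Set.range (MvPolynomial.X : σ → MvPolynomial σ K))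

/-- The coordinate vectors `P i` are nonzero and represent pairwise distinct
points of projective space (no two are proportional). -/
def ProjectivelyDistinct {K σ ι : Type*} [Field K] (P : ι → σ → K) : Prop :=
  (∀ i, P i ≠ 0) ∧ Pairwise fun i j => ∀ c : K, P i ≠ c • P j

/-- `α(J)`: the least degree of a nonzero homogeneous element of `J`. -/
def idealAlpha {K σ : Type*} [Field K] (J : Ideal (MvPolynomial σ K)) : ℕ :=
  sInf {d : ℕ | ∃ F ∈ J, F ≠ 0 ∧ MvPolynomial.IsHomogeneous F d}

/-! ### Auxiliary material -/

/-- The ideal of polynomials whose `k`-th coefficient lies in `A ^ (s - k)`. -/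
def coeffIdeal {R : Type*} [CommRing R] (A : Ideal R) (s : ℕ) : Ideal (Polynomial R) where
  carrier := {f | ∀ k, f.coeff k ∈ A ^ (s - k)}
  zero_mem' := fun k => by simp
  add_mem' := fun hf hg k => by
    simpa [Polynomial.coeff_add] using add_mem (hf k) (hg k)
  smul_mem' := fun c f hf => by
    intro k
    rw [smul_eq_mul, Polynomial.coeff_mul]
    refine Ideal.sum_mem _ fun x hx => ?_
    have hxk : x.1 + x.2 = k := Finset.HasAntidiagonal.mem_antidiagonal.mp hx
    exact Ideal.mul_mem_left _ _ (Ideal.pow_le_pow_right (by omega) (hf x.2))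

lemma mem_coeffIdeal {R : Type*} [CommRing R] {A : Ideal R} {s : ℕ} {f : Polynomial R} :
    f ∈ coeffIdeal A s ↔ ∀ k, f.coeff k ∈ A ^ (s - k) := Iff.rfl

lemma coeffIdeal_mul_le {R : Type*} [CommRing R] (A : Ideal R) (s t : ℕ) :
    coeffIdeal A s * coeffIdeal A t ≤ coeffIdeal A (s + t) := by
  rw [Ideal.mul_le]
  intro f hf g hg k
  rw [Polynomial.coeff_mul]
  refine Ideal.sum_mem _ fun x hx => ?_
  have hxk : x.1 + x.2 = k := Finset.HasAntidiagonal.mem_antidiagonal.mp hx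
  have h1 : f.coeff x.1 * g.coeff x.2 ∈ A ^ ((s - x.1) + (t - x.2)) := by
    rw [pow_add]; exact Ideal.mul_mem_mul (hf x.1) (hg x.2)
  exact Ideal.pow_le_pow_right (by omega) h1

lemma pow_le_coeffIdeal {R : Type*} [CommRing R] {A : Ideal R}
    {J : Ideal (Polynomial R)} (hJ : J ≤ coeffIdeal A 1) (m : ℕ) :
    J ^ m ≤ coeffIdeal A m := by
  induction m with
  | zero =>
      intro f _ k
      simpa [Nat.zero_sub] using Submodule.mem_top
  | succ m ih =>
      calc J ^ (m + 1) = J ^ m * J := pow_succ J m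
        _ ≤ coeffIdeal A m * coeffIdeal A 1 := Ideal.mul_mono ih hJ
        _ ≤ coeffIdeal A (m + 1) := coeffIdeal_mul_le A m 1

lemma finsupp_degree_eq_sum_univ {k : ℕ} (d : Fin k →₀ ℕ) :
    d.degree = ∑ j, d j :=
  Finset.sum_subset (Finset.subset_univ _) fun x _ hx =>
    Finsupp.notMem_support_iff.mp hx

lemma finsupp_degree_cons_zero {k : ℕ} (m : Fin k →₀ ℕ) :
    (m.cons 0).degree = m.degree := by
  rw [finsupp_degree_eq_sum_univ, finsupp_degree_eq_sum_univ, Fin.sum_univ_succ]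
  simp [Finsupp.cons_zero, Finsupp.cons_succ]

/-- The constant (in `x₀`) coefficient of a homogeneous polynomial is homogeneous of the
same degree. -/
lemma coeff_zero_finSuccEquiv_isHomogeneous {K : Type*} [Field K] {n d : ℕ}
    {F : MvPolynomial (Fin (n + 1)) K} (hF : F.IsHomogeneous d) :
    ((finSuccEquiv K n F).coeff 0).IsHomogeneous d := by
  intro m hm
  rw [finSuccEquiv_coeff_coeff] at hm
  have := hF hm
  erw [← Finsupp.degree_eq_weight_one] at this ⊢
  rwa [finsupp_degree_cons_zero] at this

lemma finSuccEquiv_rename_succ {K : Type*} [Field K] {n : ℕ}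
    (g : MvPolynomial (Fin n) K) :
    finSuccEquiv K n (rename Fin.succ g) = Polynomial.C g := by
  induction g using MvPolynomial.induction_on with
  | C a => simp [finSuccEquiv_apply]
  | add p q hp hq => simp [hp, hq]
  | mul_X p j hp => simp [hp, finSuccEquiv_X_succ]

theorem stmt14 {K : Type*} [Field K] [IsAlgClosed K]
    {N n : ℕ} (hN : 1 ≤ N) (hn : 1 ≤ n)
    (P : Fin n → (Fin (N + 2) → K)) (hP : ProjectivelyDistinct P)
    (hinH : ∀ i, P i 0 = 0)
    (h : ∀ r : ℕ, 1 ≤ r →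
      symbPow (fun i (j : Fin (N + 1)) => P i j.succ) (r * N - (N - 1)) ≤
        symbPow (fun i (j : Fin (N + 1)) => P i j.succ) 1 ^ r) :
    ∀ r : ℕ, 1 ≤ r →
      symbPow P (r * (N + 1) - N) ≤ symbPow P (r * N - (N - 1)) ∧
      symbPow P (r * N - (N - 1)) ≤ symbPow P 1 ^ r := by
  intro r hr
  have hrN : r * (N + 1) = r * N + r := by ring
  constructor
  · exact iInf_mono fun i => Ideal.pow_le_pow_right (by omega)
  · -- the hard containment
    set m := r * N - (N - 1) with hm
    intro F hF
    simp only [symbPow, Ideal.mem_iInf] at hF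
    set φ := finSuccEquiv K (N + 1) with hφ
    -- componentwise membership per point
    have hcomp : ∀ i k, (φ F).coeff k ∈
        homVanishingIdeal (fun j : Fin (N + 1) => P i j.succ) ^ (m - k) := by
      intro i k
      set A := homVanishingIdeal (fun j : Fin (N + 1) => P i j.succ) with hA
      have hPi : (Fin.cons 0 (fun j : Fin (N + 1) => P i j.succ) : Fin (N + 2) → K) = P i := by
        funext j
        refine Fin.cases ?_ (fun j => ?_) j
        · rw [Fin.cons_zero, hinH i]
        · rw [Fin.cons_succ]
      have h1 : Ideal.map φ (homVanishingIdeal (P i)) ≤ coeffIdeal A 1 := by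
        rw [homVanishingIdeal, Ideal.map_span, Ideal.span_le]
        rintro f ⟨G, ⟨⟨d, hd⟩, hev⟩, rfl⟩
        intro k
        match k with
        | 0 =>
            rw [pow_one]
            apply Ideal.subset_span
            refine ⟨⟨d, coeff_zero_finSuccEquiv_isHomogeneous hd⟩, ?_⟩
            have := eval_eq_eval_mv_eval' (fun j : Fin (N + 1) => P i j.succ) 0 G
            rw [hPi, hev] at this
            rw [← Polynomial.coeff_zero_eq_eval_zero, Polynomial.coeff_map] at this
            exact this.symm
        | (k + 1) =>
            simpa [Nat.sub_eq_zero_of_le (Nat.le_add_left 1 k)] using Submodule.mem_top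
      have h2 : φ F ∈ (Ideal.map φ (homVanishingIdeal (P i))) ^ m := by
        rw [← Ideal.map_pow]
        exact Ideal.mem_map_of_mem _ (hF i)
      exact pow_le_coeffIdeal h1 m h2 k
    -- rename carries the small ideals into the big ones
    have hrename : ∀ i, Ideal.map (rename (R := K) Fin.succ)
        (homVanishingIdeal (fun j : Fin (N + 1) => P i j.succ)) ≤ homVanishingIdeal (P i) := by
      intro i
      rw [homVanishingIdeal, Ideal.map_span, Ideal.span_le]
      rintro f ⟨G, ⟨⟨d, hd⟩, hev⟩, rfl⟩
      apply Ideal.subset_span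
      exact ⟨⟨d, hd.rename_isHomogeneous⟩, by rw [eval_rename]; exact hev⟩
    have hmaple : Ideal.map (rename (R := K) Fin.succ)
        (symbPow (fun i (j : Fin (N + 1)) => P i j.succ) 1) ≤ symbPow P 1 := by
      refine le_iInf fun i => ?_
      rw [pow_one]
      refine le_trans (Ideal.map_mono ?_) (hrename i)
      refine le_trans (iInf_le _ i) ?_
      rw [pow_one]
    have hX0 : (X 0 : MvPolynomial (Fin (N + 2)) K) ∈ symbPow P 1 := by
      simp only [symbPow, Ideal.mem_iInf, pow_one]
      intro i
      exact Ideal.subset_span ⟨⟨1, isHomogeneous_X _ _⟩, by simp [hinH i]⟩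
    -- each graded piece lies in `symbPow P 1 ^ r`
    have key : ∀ k, (X 0 : MvPolynomial (Fin (N + 2)) K) ^ k *
        rename Fin.succ ((φ F).coeff k) ∈ symbPow P 1 ^ r := by
      intro k
      by_cases hk : r ≤ k
      · refine Ideal.mul_mem_right _ _ ?_
        have : (X 0 : MvPolynomial (Fin (N + 2)) K) ^ k
            = (X 0) ^ (k - r) * (X 0) ^ r := by
          rw [← pow_add]
          congr 1
          omega
        rw [this]
        exact Ideal.mul_mem_left _ _ (Ideal.pow_mem_pow hX0 r)
      · push_neg at hk
        have h2 : (φ F).coeff k ∈ symbPow (fun i (j : Fin (N + 1)) => P i j.succ) (m - k) := by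
          simp only [symbPow, Ideal.mem_iInf]
          exact fun i => hcomp i k
        have harith : (r - k) * N - (N - 1) ≤ m - k := by
          have h3 : (r - k) * N = r * N - k * N := Nat.sub_mul r k N
          have h4 : k ≤ k * N := Nat.le_mul_of_pos_right k (by omega)
          omega
        have h5 : (φ F).coeff k ∈
            symbPow (fun i (j : Fin (N + 1)) => P i j.succ) ((r - k) * N - (N - 1)) :=
          iInf_mono (fun i => Ideal.pow_le_pow_right harith) h2
        have h6 := h (r - k) (by omega) h5
        have h7 : rename (R := K) Fin.succ ((φ F).coeff k) ∈ symbPow P 1 ^ (r - k) := by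
          have := Ideal.mem_map_of_mem (rename (R := K) Fin.succ) h6
          rw [Ideal.map_pow] at this
          exact Ideal.pow_right_mono hmaple (r - k) this
        have h8 : (X 0 : MvPolynomial (Fin (N + 2)) K) ^ k ∈ symbPow P 1 ^ k :=
          Ideal.pow_mem_pow hX0 k
        have h9 := Ideal.mul_mem_mul h8 h7
        rwa [← pow_add, Nat.add_sub_cancel' (le_of_lt hk)] at h9
    -- reconstruct `F` from its components
    have hFeq : F = ∑ k ∈ Finset.range ((φ F).natDegree + 1),
        (X 0 : MvPolynomial (Fin (N + 2)) K) ^ k * rename Fin.succ ((φ F).coeff k) := by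
      apply φ.injective
      rw [map_sum]
      conv_lhs => rw [(φ F).as_sum_range_C_mul_X_pow]
      refine Finset.sum_congr rfl fun k _ => ?_
      rw [map_mul, map_pow, finSuccEquiv_rename_succ]
      simp only [hφ, finSuccEquiv_X_zero]
      ring
    rw [hFeq]
    exact Ideal.sum_mem _ fun k _ => key k
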